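/- Let f = Σ_{r=0}^n x_r^{d_1} g_r be a CW-Nagata polynomial of bidegree (d_1,d_2). For every j with 1 ≤ j ≤ d_2, the bihomogeneous component Ann(f)_{(0,j)} (operators of bidegree (0,j) annihilating f) is spanned as a K-vector space exactly by the monomials U_1^{s_1}⋯U_m^{s_m} with s_1+⋯+s_m = j such that u_1^{s_1}⋯u_m^{s_m} divides none of g_0,…,g_n; equivalently, a K-linear combination of monomials of degree j in U_1,…,U_m annihilates f if and only if the coefficient of every monomial whose u-counterpart divides some g_r is zero. -/

import Mathlib

open MvPolynomial

namespace CW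

variable {σ K : Type*} [CommSemiring K]

/-- A generic "monomial contraction-type" action of the polynomial ring on itself,
determined by a structure coefficient `ν c a` (the coefficient produced when the
operator monomial with exponent `a` acts on the monomial with exponent `c`). -/
noncomputable def genAct (ν : (σ →₀ ℕ) → (σ →₀ ℕ) → K) (α f : MvPolynomial σ K) :
    MvPolynomial σ K :=
  Finsupp.sum (AddMonoidAlgebra.coeff α) fun a ca => Finsupp.sum (AddMonoidAlgebra.coeff f) fun c cf => monomial (c - a) (ν c a * (ca * cf))

theorem genAct_zero_left (ν : (σ →₀ ℕ) → (σ →₀ ℕ) → K) (f : MvPolynomial σ K) :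
    genAct ν 0 f = 0 := by
  unfold genAct
  simp

theorem genAct_zero_right (ν : (σ →₀ ℕ) → (σ →₀ ℕ) → K) (α : MvPolynomial σ K) :
    genAct ν α 0 = 0 := by
  unfold genAct
  simp

theorem genAct_add_left (ν : (σ →₀ ℕ) → (σ →₀ ℕ) → K) (α β f : MvPolynomial σ K) :
    genAct ν (α + β) f = genAct ν α f + genAct ν β f := by
  unfold genAct
  rw [AddMonoidAlgebra.coeff_add]
  apply Finsupp.sum_add_index'
  · intro a
    simp
  · intro a b₁ b₂
    rw [← Finsupp.sum_add]
    apply Finsupp.sum_congr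
    intro c _
    rw [add_mul, mul_add, map_add]

theorem genAct_add_right (ν : (σ →₀ ℕ) → (σ →₀ ℕ) → K) (α f g : MvPolynomial σ K) :
    genAct ν α (f + g) = genAct ν α f + genAct ν α g := by
  unfold genAct
  rw [← Finsupp.sum_add]
  apply Finsupp.sum_congr
  intro a _
  rw [AddMonoidAlgebra.coeff_add]
  apply Finsupp.sum_add_index'
  · intro c
    simp only [mul_zero, map_zero]
  · intro c c₁ c₂
    rw [mul_add, mul_add, map_add]

theorem genAct_monomial (ν : (σ →₀ ℕ) → (σ →₀ ℕ) → K) (a c : σ →₀ ℕ) (r s : K) :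
    genAct ν (monomial a r) (monomial c s) = monomial (c - a) (ν c a * (r * s)) := by
  unfold genAct
  rw [← single_eq_monomial a r, ← single_eq_monomial c s]
  simp [Finsupp.sum_single_index]

theorem genAct_mul {ν : (σ →₀ ℕ) → (σ →₀ ℕ) → K}
    (hν : ∀ c a b, ν c (a + b) = ν c b * ν (c - b) a) (α β f : MvPolynomial σ K) :
    genAct ν (α * β) f = genAct ν α (genAct ν β f) := by
  induction α using MvPolynomial.induction_on' with
  | add p q hp hq => rw [add_mul, genAct_add_left, hp, hq, genAct_add_left]
  | monomial a r =>
    induction β using MvPolynomial.induction_on' with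
    | add p q hp hq =>
      rw [mul_add, genAct_add_left, hp, hq, ← genAct_add_right, genAct_add_left]
    | monomial b s =>
      induction f using MvPolynomial.induction_on' with
      | add p q hp hq =>
        rw [genAct_add_right, hp, hq, ← genAct_add_right, ← genAct_add_right]
      | monomial c t =>
        rw [monomial_mul, genAct_monomial, genAct_monomial, genAct_monomial,
          show c - (a + b) = c - b - a from by rw [tsub_tsub, add_comm], hν]
        congr 1
        ring

/-- The annihilator ideal of `f` under the action `genAct ν`. -/
noncomputable def annG (ν : (σ →₀ ℕ) → (σ →₀ ℕ) → K)
    (hν : ∀ c a b, ν c (a + b) = ν c b * ν (c - b) a) (f : MvPolynomial σ K) :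
    Ideal (MvPolynomial σ K) where
  carrier := {α | genAct ν α f = 0}
  zero_mem' := genAct_zero_left ν f
  add_mem' := by
    intro a b ha hb
    show genAct ν (a + b) f = 0
    rw [genAct_add_left, ha, hb, add_zero]
  smul_mem' := by
    intro c α hα
    show genAct ν (c * α) f = 0
    rw [genAct_mul hν, hα, genAct_zero_right]

/-- Structure coefficient of the contraction (apolarity) action: `X^a` sends `x^c`
to `x^(c-a)` if `a ≤ c` and to `0` otherwise. -/
noncomputable def cnu (c a : σ →₀ ℕ) : K :=
  open scoped Classical in if a ≤ c then 1 else 0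

theorem cnu_mul (c a b : σ →₀ ℕ) :
    (cnu c (a + b) : K) = cnu c b * cnu (c - b) a := by
  classical
  unfold cnu
  by_cases hb : b ≤ c
  · by_cases ha : a ≤ c - b
    · have h : a + b ≤ c := (le_tsub_iff_right hb).mp ha
      simp [hb, ha, h]
    · have h : ¬ a + b ≤ c := fun h => ha ((le_tsub_iff_right hb).mpr h)
      simp [hb, ha, h]
  · have h : ¬ a + b ≤ c := fun h => hb (le_trans le_add_self h)
    simp [hb, h]

/-- The contraction action `α ∘ f`. -/
noncomputable def cAct (α f : MvPolynomial σ K) : MvPolynomial σ K :=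
  genAct cnu α f

/-- The annihilator `Ann(f)` of `f` under the contraction action, as an ideal. -/
noncomputable def cAnn (f : MvPolynomial σ K) : Ideal (MvPolynomial σ K) :=
  annG cnu cnu_mul f

theorem mem_cAnn {f α : MvPolynomial σ K} : α ∈ cAnn f ↔ cAct α f = 0 := Iff.rfl

/-- The `K`-submodule of polynomials all of whose monomials satisfy `P`. -/
noncomputable def bihom (K : Type*) [CommSemiring K] {σ : Type*} (P : (σ →₀ ℕ) → Prop) :
    Submodule K (MvPolynomial σ K) where
  carrier := {p | ∀ c ∈ p.support, P c}
  zero_mem' := by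
    intro c hc
    simp at hc
  add_mem' := by
    classical
    intro p q hp hq c hc
    rcases Finset.mem_union.mp (MvPolynomial.support_add hc) with h | h
    · exact hp c h
    · exact hq c h
  smul_mem' := by
    intro k p hp c hc
    exact hp c (MvPolynomial.support_smul hc)

/-- The x-degree of an exponent vector. -/
def degX {n m : ℕ} (c : (Fin (n + 1) ⊕ Fin m) →₀ ℕ) : ℕ := ∑ r, c (Sum.inl r)

/-- The u-degree of an exponent vector. -/
def degU {n m : ℕ} (c : (Fin (n + 1) ⊕ Fin m) →₀ ℕ) : ℕ := ∑ k, c (Sum.inr k)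

/-- The bihomogeneous component `T_(i,j)`. -/
noncomputable def Tbi (K : Type*) [CommSemiring K] {n m : ℕ} (i j : ℕ) :
    Submodule K (MvPolynomial (Fin (n + 1) ⊕ Fin m) K) :=
  bihom K fun c => degX c = i ∧ degU c = j

/-- The bigraded component `A_(i,j)` of `A = T ⧸ Ann(f)`: the image of `T_(i,j)`
in the quotient. -/
noncomputable def Abi {K : Type*} [Field K] {n m : ℕ}
    (f : MvPolynomial (Fin (n + 1) ⊕ Fin m) K) (i j : ℕ) :
    Submodule K (MvPolynomial (Fin (n + 1) ⊕ Fin m) K ⧸ cAnn f) :=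
  (Tbi K i j).map (Ideal.Quotient.mkₐ K (cAnn f)).toLinearMap

section Helpers

variable {n m : ℕ}

/-- Embed a `u`-exponent vector into the full exponent vectors. -/
noncomputable abbrev emb (s : Fin m →₀ ℕ) : (Fin (n + 1) ⊕ Fin m) →₀ ℕ :=
  s.mapDomain Sum.inr

lemma emb_apply_inr (s : Fin m →₀ ℕ) (k : Fin m) : (emb (n := n) s) (Sum.inr k) = s k :=
  Finsupp.mapDomain_apply Sum.inr_injective _ _

lemma emb_apply_inl (s : Fin m →₀ ℕ) (r : Fin (n + 1)) : (emb s) (Sum.inl r) = 0 :=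
  Finsupp.mapDomain_notin_range _ _ (by simp)

lemma emb_injective : Function.Injective (emb (n := n) (m := m)) :=
  Finsupp.mapDomain_injective Sum.inr_injective

lemma emb_le_iff (s t : Fin m →₀ ℕ) (r : Fin (n + 1)) (d : ℕ) :
    emb s ≤ Finsupp.single (Sum.inl r) d + emb t ↔ s ≤ t := by
  classical
  rw [Finsupp.le_def, Finsupp.le_def]
  constructor
  · intro h k
    have := h (Sum.inr k)
    simpa [emb_apply_inr, Finsupp.single_apply] using this
  · intro h x
    cases x with
    | inl r' => simp [emb_apply_inl]
    | inr k =>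
      have := h k
      simpa [emb_apply_inr, Finsupp.single_apply] using this

lemma sub_emb (r : Fin (n + 1)) (d : ℕ) (t s : Fin m →₀ ℕ) :
    (Finsupp.single (Sum.inl r) d + emb t) - emb s
      = Finsupp.single (Sum.inl r) d + emb (t - s) := by
  classical
  ext x
  cases x with
  | inl r' => simp [Finsupp.tsub_apply, emb_apply_inl]
  | inr k =>
    simp [Finsupp.tsub_apply, emb_apply_inr, Finsupp.single_apply]

lemma single_add_emb_inj {d : ℕ} (hd : 1 ≤ d) {r r' : Fin (n + 1)} {t t' : Fin m →₀ ℕ}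
    (h : Finsupp.single (Sum.inl r) d + emb t = Finsupp.single (Sum.inl r') d + emb t') :
    r = r' ∧ t = t' := by
  classical
  have hr : r = r' := by
    by_contra hrr
    have := congrArg (fun c => c (Sum.inl r)) h
    simp [Finsupp.single_apply, emb_apply_inl, Ne.symm hrr] at this
    omega
  refine ⟨hr, ?_⟩
  ext k
  have := congrArg (fun c => c (Sum.inr k)) h
  simpa [Finsupp.single_apply, emb_apply_inr] using this

lemma degX_emb (s : Fin m →₀ ℕ) : degX (n := n) (emb s) = 0 := by
  simp [degX, emb_apply_inl]

lemma degU_emb (s : Fin m →₀ ℕ) : degU (n := n) (emb s) = ∑ k, s k := by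
  simp [degU, emb_apply_inr]

/-- Any exponent vector with `degX = 0` is an `emb`. -/
lemma exists_emb_of_degX_eq_zero {a : (Fin (n + 1) ⊕ Fin m) →₀ ℕ} (ha : degX a = 0) :
    ∃ s : Fin m →₀ ℕ, a = emb s ∧ (∑ k, s k) = degU a := by
  have hinl : ∀ r, a (Sum.inl r) = 0 := by
    intro r
    have := (Finset.sum_eq_zero_iff.mp ha) r (Finset.mem_univ r)
    exact this
  refine ⟨Finsupp.comapDomain Sum.inr a Sum.inr_injective.injOn, ?_, ?_⟩
  · refine (Finsupp.mapDomain_comapDomain Sum.inr Sum.inr_injective a ?_).symm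
    intro x hx
    cases x with
    | inl r => simp only [Finset.mem_coe, Finsupp.mem_support_iff] at hx; exact absurd (hinl r) hx
    | inr k => exact ⟨k, rfl⟩
  · simp [Finsupp.comapDomain_apply, degU]

end Helpers

section GenActSum

variable {σ K : Type*} [CommSemiring K]

lemma genAct_sum_left (ν : (σ →₀ ℕ) → (σ →₀ ℕ) → K) {ι : Type*} (s : Finset ι)
    (h : ι → MvPolynomial σ K) (f : MvPolynomial σ K) :
    genAct ν (∑ i ∈ s, h i) f = ∑ i ∈ s, genAct ν (h i) f := by
  classical
  induction s using Finset.induction_on with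
  | empty => simp [genAct_zero_left]
  | insert i s hi ih => rw [Finset.sum_insert hi, Finset.sum_insert hi, genAct_add_left, ih]

lemma genAct_sum_right (ν : (σ →₀ ℕ) → (σ →₀ ℕ) → K) {ι : Type*} (s : Finset ι)
    (α : MvPolynomial σ K) (h : ι → MvPolynomial σ K) :
    genAct ν α (∑ i ∈ s, h i) = ∑ i ∈ s, genAct ν α (h i) := by
  classical
  induction s using Finset.induction_on with
  | empty => simp [genAct_zero_right]
  | insert i s hi ih => rw [Finset.sum_insert hi, Finset.sum_insert hi, genAct_add_right, ih]

end GenActSum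

section Key

variable {K : Type*} [Field K] {n m : ℕ}

open MvPolynomial

lemma cnu_of_le {σ : Type*} {a c : σ →₀ ℕ} (h : a ≤ c) : (cnu c a : K) = 1 := by
  classical
  simp [cnu, h]

lemma cnu_of_not_le {σ : Type*} {a c : σ →₀ ℕ} (h : ¬ a ≤ c) : (cnu c a : K) = 0 := by
  classical
  simp [cnu, h]

lemma cAct_eq_sum (d₁ : ℕ) (g : Fin (n + 1) → (Fin m →₀ ℕ))
    (α : MvPolynomial (Fin (n + 1) ⊕ Fin m) K) :
    cAct α (∑ r, X (Sum.inl r) ^ d₁ * monomial ((g r).mapDomain Sum.inr) 1)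
      = ∑ a ∈ α.support, ∑ r,
          monomial ((Finsupp.single (Sum.inl r) d₁ + emb (g r)) - a)
            (cnu (Finsupp.single (Sum.inl r) d₁ + emb (g r)) a * coeff a α) := by
  classical
  conv_lhs => rw [MvPolynomial.as_sum α]
  unfold cAct
  rw [genAct_sum_left]
  refine Finset.sum_congr rfl fun a _ => ?_
  rw [genAct_sum_right]
  refine Finset.sum_congr rfl fun r _ => ?_
  rw [X_pow_eq_monomial, monomial_mul, genAct_monomial]
  simp [emb]

/-- Core equivalence (Statement 14, second part). -/
lemma annihilates_iff {d₁ : ℕ} (hd₁ : 1 ≤ d₁) (g : Fin (n + 1) → (Fin m →₀ ℕ))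
    {j : ℕ} {α : MvPolynomial (Fin (n + 1) ⊕ Fin m) K} (hα : α ∈ Tbi K (n := n) (m := m) 0 j) :
    cAct α (∑ r, X (Sum.inl r) ^ d₁ * monomial ((g r).mapDomain Sum.inr) 1) = 0 ↔
      ∀ s : Fin m →₀ ℕ, (∑ k, s k) = j → (∃ r, s ≤ g r) →
        coeff (s.mapDomain Sum.inr) α = 0 := by
  classical
  rw [cAct_eq_sum]
  have hdecomp : ∀ a ∈ α.support, ∃ s : Fin m →₀ ℕ, a = emb s ∧ (∑ k, s k) = j := by
    intro a ha
    obtain ⟨hx, hu⟩ := hα a ha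
    obtain ⟨s, hs1, hs2⟩ := exists_emb_of_degX_eq_zero hx
    exact ⟨s, hs1, by rw [hs2, hu]⟩
  constructor
  · intro h0 s hs ⟨r, hsr⟩
    by_cases hmem : emb (n := n) s ∈ α.support
    swap
    · exact notMem_support_iff.mp hmem
    have hkey := congrArg (coeff (Finsupp.single (Sum.inl r) d₁ + emb (g r - s))) h0
    rw [coeff_zero] at hkey
    simp only [coeff_sum, coeff_monomial] at hkey
    rw [Finset.sum_eq_single (emb (n := n) s)] at hkey
    · rw [Finset.sum_eq_single r] at hkey
      · rw [if_pos (sub_emb r d₁ (g r) s), cnu_of_le ((emb_le_iff s (g r) r d₁).mpr hsr),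
          one_mul] at hkey
        exact hkey
      · intro r' _ hr'
        split_ifs with h
        · exfalso
          rw [sub_emb] at h
          exact hr' (single_add_emb_inj hd₁ h).1
        · rfl
      · intro h
        exact absurd (Finset.mem_univ r) h
    · intro a ha hne
      refine Finset.sum_eq_zero fun r' _ => ?_
      obtain ⟨sa, rfl, hsaj⟩ := hdecomp a ha
      split_ifs with h
      · by_cases hle : sa ≤ g r'
        · exfalso
          rw [sub_emb] at h
          obtain ⟨hrr, htt⟩ := single_add_emb_inj hd₁ h
          subst hrr
          apply hne
          congr 1
          have h1 : g r' - (g r' - sa) = sa := tsub_tsub_cancel_of_le hle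
          have h2 : g r' - (g r' - s) = s := tsub_tsub_cancel_of_le hsr
          rw [← h1, htt, h2]
        · rw [cnu_of_not_le (fun hc => hle ((emb_le_iff sa (g r') r' d₁).mp hc))]
          ring
      · rfl
    · intro h
      exact absurd hmem h
  · intro hc
    refine Finset.sum_eq_zero fun a ha => Finset.sum_eq_zero fun r _ => ?_
    obtain ⟨s, rfl, hsj⟩ := hdecomp a ha
    by_cases hle : s ≤ g r
    · have h1 : (emb s : (Fin (n + 1) ⊕ Fin m) →₀ ℕ) ≤ Finsupp.single (Sum.inl r) d₁ + emb (g r) :=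
        (emb_le_iff s (g r) r d₁).mpr hle
      rw [hc s hsj ⟨r, hle⟩]
      simp
    · rw [cnu_of_not_le (fun h => hle ((emb_le_iff s (g r) r d₁).mp h))]
      simp

end Key

open MvPolynomial in
theorem stmt_14 {K : Type*} [Field K] [CharZero K] (n m d₁ d₂ : ℕ)
    (hd₁ : 1 ≤ d₁) (hd₂ : 2 ≤ d₂)
    (g : Fin (n + 1) → (Fin m →₀ ℕ))
    (hgdeg : ∀ r, (∑ k, g r k) = d₂)
    (hginj : Function.Injective g)
    (f : MvPolynomial (Fin (n + 1) ⊕ Fin m) K)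
    (hf : f = ∑ r, X (Sum.inl r) ^ d₁ * monomial ((g r).mapDomain Sum.inr) 1)
    (j : ℕ) (hj : 1 ≤ j) (hjd : j ≤ d₂) :
    -- the component `Ann(f)_(0,j)` is spanned by the monomials `U^s` of degree `j`
    -- dividing none of the `g_r`
    (Submodule.restrictScalars K (cAnn f) ⊓ Tbi K (n := n) (m := m) 0 j =
      Submodule.span K {α : MvPolynomial (Fin (n + 1) ⊕ Fin m) K |
        ∃ s : Fin m →₀ ℕ, (∑ k, s k) = j ∧ (∀ r, ¬ s ≤ g r) ∧
          α = monomial (s.mapDomain Sum.inr) 1}) ∧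
    -- equivalently: a combination of degree-`j` `U`-monomials annihilates `f` iff the
    -- coefficient of every monomial dividing some `g_r` vanishes
    (∀ α ∈ Tbi K (n := n) (m := m) 0 j,
      (α ∈ cAnn f ↔ ∀ s : Fin m →₀ ℕ, (∑ k, s k) = j → (∃ r, s ≤ g r) →
        coeff (s.mapDomain Sum.inr) α = 0)) := by
  classical
  have hf' : f = ∑ r, X (Sum.inl r) ^ d₁ * monomial ((g r).mapDomain Sum.inr) 1 := hf
  have part2 : ∀ α ∈ Tbi K (n := n) (m := m) 0 j,
      (α ∈ cAnn f ↔ ∀ s : Fin m →₀ ℕ, (∑ k, s k) = j → (∃ r, s ≤ g r) →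
        coeff (s.mapDomain Sum.inr) α = 0) := by
    intro α hα
    rw [mem_cAnn, hf']
    exact annihilates_iff hd₁ g hα
  refine ⟨?_, part2⟩
  apply le_antisymm
  · rintro α ⟨hann, hT⟩
    have hT' : α ∈ Tbi K (n := n) (m := m) 0 j := hT
    have hcoeff := (part2 α hT').mp hann
    rw [MvPolynomial.as_sum α]
    refine Submodule.sum_mem _ fun a ha => ?_
    obtain ⟨hx, hu⟩ := hT' a ha
    obtain ⟨s, rfl, hsj⟩ := exists_emb_of_degX_eq_zero hx
    have hsj' : (∑ k, s k) = j := by rw [hsj, hu]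
    have hnd : ∀ r, ¬ s ≤ g r := by
      intro r hr
      exact (MvPolynomial.mem_support_iff.mp ha) (hcoeff s hsj' ⟨r, hr⟩)
    have : (monomial (emb (n := n) s)) (coeff (emb (n := n) s) α)
        = (coeff (emb (n := n) s) α) • (monomial (emb (n := n) s)) (1 : K) := by
      rw [smul_monomial, smul_eq_mul, mul_one]
    rw [this]
    exact Submodule.smul_mem _ _ (Submodule.subset_span ⟨s, hsj', hnd, rfl⟩)
  · rw [Submodule.span_le]
    rintro α ⟨s, hsj, hnd, rfl⟩
    have hT : (monomial (emb (n := n) s)) (1 : K) ∈ Tbi K (n := n) (m := m) 0 j := by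
      intro c hc
      rw [MvPolynomial.support_monomial] at hc
      simp only [if_neg (one_ne_zero (α := K)), Finset.mem_singleton] at hc
      subst hc
      exact ⟨degX_emb s, by rw [degU_emb, hsj]⟩
    refine ⟨?_, hT⟩
    show (monomial (emb (n := n) s)) (1 : K) ∈ cAnn f
    rw [part2 _ hT]
    intro s' hs' ⟨r, hr⟩
    rw [coeff_monomial, if_neg]
    intro h
    exact hnd r (emb_injective h ▸ hr)

end CW
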